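/- Let A, Σ, δ > 0 and define C(t,s) = (Σ/A)·exp(−A|t−s|) for t,s ∈ ℝ. Then (1/δ)·( C(δ,δ) − C(δ,0) − (1/δ)∫₀^δ (C(s,δ) − C(s,0)) ds ) = ((1 − e^{−δA})/(δA))·Σ. Moreover this quantity is strictly smaller than Σ for every δ > 0, and it converges to Σ as δ → 0⁺. (Consequently, for a stationary Ornstein–Uhlenbeck process with this covariance, the limit of the filtered-data diffusion estimator, (1/δ)E[(X⁰(δ) − Z(δ))(X⁰(δ) − X⁰(0))] with Z(δ) = (1/δ)∫₀^δ X⁰(s) ds, equals ((1 − e^{−δA})/(δA))Σ, so the estimator is asymptotically unbiased only if δ → 0.) -/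

import Mathlib

open Real Filter intervalIntegral

lemma exp_int (c a b : ℝ) (hc : c ≠ 0) :
    ∫ x in a..b, Real.exp (c * x) = (Real.exp (c * b) - Real.exp (c * a)) / c := by
  have := intervalIntegral.integral_comp_mul_left (fun x => Real.exp x) hc (a := a) (b := b)
  rw [this, integral_exp]
  field_simp
  rw [smul_eq_mul, ← mul_assoc, mul_one_div_cancel hc, one_mul]

/-- Covariance function of the stationary Ornstein–Uhlenbeck process
`dX = -A X dt + √(2Σ) dW`: `C(t,s) = (Σ/A) exp(-A|t-s|)`. -/
noncomputable def OUcov (A S : ℝ) (t s : ℝ) : ℝ := S / A * Real.exp (-(A * |t - s|))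

/-- For the stationary OU covariance `C(t,s) = (Σ/A)e^{-A|t-s|}` and every `δ > 0`,
`(1/δ)(C(δ,δ) - C(δ,0) - (1/δ)∫_0^δ (C(s,δ) - C(s,0)) ds) = ((1 - e^{-δA})/(δA))Σ`,
this quantity is strictly smaller than `Σ` for every `δ > 0`, and it tends to `Σ` as
`δ → 0⁺`; hence the filtered-data diffusion estimator is asymptotically unbiased only
if `δ → 0`. -/
theorem OU_diffusion_estimator_bias (A S : ℝ) (hA : 0 < A) (hS : 0 < S) :
    (∀ δ : ℝ, 0 < δ →
      (1 / δ) * (OUcov A S δ δ - OUcov A S δ 0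
          - (1 / δ) * ∫ s in (0 : ℝ)..δ, (OUcov A S s δ - OUcov A S s 0))
        = (1 - Real.exp (-(δ * A))) / (δ * A) * S) ∧
    (∀ δ : ℝ, 0 < δ → (1 - Real.exp (-(δ * A))) / (δ * A) * S < S) ∧
    Tendsto (fun δ : ℝ => (1 - Real.exp (-(δ * A))) / (δ * A) * S)
      (nhdsWithin 0 (Set.Ioi 0)) (nhds S) := by
  refine ⟨?_, ?_, ?_⟩
  · intro δ hδ
    have hA' : A ≠ 0 := hA.ne'
    have hint : (∫ s in (0 : ℝ)..δ, (OUcov A S s δ - OUcov A S s 0)) = 0 := by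
      have hcong : ∀ s ∈ Set.uIcc (0:ℝ) δ,
          OUcov A S s δ - OUcov A S s 0
            = S / A * Real.exp (-(A*δ)) * Real.exp (A * s) - S / A * Real.exp ((-A) * s) := by
        intro s hs
        rw [Set.uIcc_of_le hδ.le] at hs
        obtain ⟨h0, h1⟩ := hs
        unfold OUcov
        rw [abs_of_nonpos (by linarith), sub_zero, abs_of_nonneg h0]
        rw [show -(A * -(s - δ)) = -(A*δ) + A * s by ring, Real.exp_add]
        ring
      rw [intervalIntegral.integral_congr hcong]
      have i1 : IntervalIntegrable (fun s => S / A * Real.exp (-(A*δ)) * Real.exp (A * s))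
          MeasureTheory.volume 0 δ := (by continuity : Continuous _).intervalIntegrable _ _
      have i2 : IntervalIntegrable (fun s => S / A * Real.exp ((-A) * s))
          MeasureTheory.volume 0 δ := (by continuity : Continuous _).intervalIntegrable _ _
      rw [intervalIntegral.integral_sub i1 i2, intervalIntegral.integral_const_mul,
        intervalIntegral.integral_const_mul, exp_int A 0 δ hA', exp_int (-A) 0 δ (neg_ne_zero.2 hA')]
      have hE : Real.exp (-(A*δ)) * Real.exp (A * δ) = 1 := by
        rw [← Real.exp_add]; simp
      have hE2 : Real.exp ((-A) * δ) = Real.exp (-(A*δ)) := by ring_nf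
      rw [hE2]
      field_simp
      simp only [mul_zero, neg_zero, Real.exp_zero]
      linear_combination S * hE
    rw [hint]
    unfold OUcov
    rw [sub_self, abs_zero, sub_zero, abs_of_nonneg hδ.le]
    have : Real.exp (-(δ * A)) = Real.exp (-(A * δ)) := by ring_nf
    rw [this]
    field_simp
    simp only [mul_zero, neg_zero, Real.exp_zero]
    ring
  · intro δ hδ
    have hx : 0 < δ * A := mul_pos hδ hA
    have h1 : 1 - Real.exp (-(δ * A)) < δ * A := by
      have := Real.add_one_lt_exp (x := -(δ * A)) (by linarith)
      linarith
    have : (1 - Real.exp (-(δ * A))) / (δ * A) < 1 := (div_lt_one hx).2 h1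
    calc (1 - Real.exp (-(δ * A))) / (δ * A) * S < 1 * S := by
          exact mul_lt_mul_of_pos_right this hS
      _ = S := one_mul S
  · have hg : HasDerivAt (fun x : ℝ => 1 - Real.exp (-x)) 1 0 := by
      simpa using ((Real.hasDerivAt_exp (-0)).comp 0 (hasDerivAt_neg 0)).const_sub 1
    have hslope := hasDerivAt_iff_tendsto_slope.1 hg
    have h1 : Tendsto (fun x : ℝ => (1 - Real.exp (-x)) / x) (nhdsWithin 0 {0}ᶜ) (nhds 1) := by
      refine hslope.congr (fun x => ?_)
      simp [slope_def_field, div_eq_div_iff]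
    have hmap : Tendsto (fun δ : ℝ => δ * A) (nhdsWithin 0 (Set.Ioi 0))
        (nhdsWithin 0 {0}ᶜ) := by
      apply tendsto_nhdsWithin_of_tendsto_nhds_of_eventually_within
      · have hc : Continuous (fun δ : ℝ => δ * A) := by continuity
        simpa using (hc.tendsto 0).mono_left nhdsWithin_le_nhds
      · filter_upwards [self_mem_nhdsWithin] with δ (hδ : 0 < δ)
        exact (mul_pos hδ hA).ne'
    have := (h1.comp hmap).mul_const S
    simpa using this
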